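/- arXiv:1010.6049 — 2 statements merged into one kernel-verified Lean document; each statement's English description precedes it below -/
import Mathlib

section
/- Define N(ρ) = −min_{W ∈ 𝒲} tr(ρW). Then N(ρ) = 0 for every biseparable state ρ on ℂ^{d_1}⊗⋯⊗ℂ^{d_n}. -/
open Matrix Finset ComplexOrder

abbrev MatD {n : ℕ} (d : Fin n → ℕ) :=
  Matrix ((a : Fin n) → Fin (d a)) ((a : Fin n) → Fin (d a)) ℂ

/-- The partial transpose with respect to the subset `M` of tensor factors. -/
def ptrans {n : ℕ} (d : Fin n → ℕ) (M : Finset (Fin n)) (X : MatD d) : MatD d :=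
  fun i j => X (fun a => if a ∈ M then j a else i a) (fun a => if a ∈ M then i a else j a)

/-- The feasible set 𝒲: Hermitian `W` such that for every nonempty strict subset `M`
there are `0 ≤ P_M ≤ 𝟙` and `0 ≤ Q_M ≤ 𝟙` with `W = P_M + Q_M^{T_M}`. -/
def FeasibleW {n : ℕ} (d : Fin n → ℕ) (W : MatD d) : Prop :=
  W.IsHermitian ∧
  ∀ M : Finset (Fin n), M.Nonempty → M ≠ Finset.univ →
    ∃ P Q : MatD d, P.PosSemidef ∧ (1 - P).PosSemidef ∧
      Q.PosSemidef ∧ (1 - Q).PosSemidef ∧ W = P + ptrans d M Q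

/-- `N(ρ) = − min_{W ∈ 𝒲} tr(ρ W)` (the minimum is attained since 𝒲 is compact;
it is expressed here as an infimum). -/
noncomputable def Nval {n : ℕ} (d : Fin n → ℕ) (ρ : MatD d) : ℝ :=
  - sInf {r : ℝ | ∃ W : MatD d, FeasibleW d W ∧ r = ((ρ * W).trace).re}

/-- Separability with respect to the bipartition `M|M̄` (entrywise tensor product). -/
def IsSepState {n : ℕ} (d : Fin n → ℕ) (M : Finset (Fin n)) (ρ : MatD d) : Prop :=
  ∃ (m : ℕ) (q : Fin m → ℝ)
    (σ : Fin m → Matrix ((a : {a : Fin n // a ∈ M}) → Fin (d a.1))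
                        ((a : {a : Fin n // a ∈ M}) → Fin (d a.1)) ℂ)
    (τ : Fin m → Matrix ((a : {a : Fin n // a ∉ M}) → Fin (d a.1))
                        ((a : {a : Fin n // a ∉ M}) → Fin (d a.1)) ℂ),
    (∀ k, 0 ≤ q k) ∧ (∑ k, q k = 1) ∧
    (∀ k, (σ k).PosSemidef ∧ (σ k).trace = 1) ∧
    (∀ k, (τ k).PosSemidef ∧ (τ k).trace = 1) ∧
    (∀ i j, ρ i j = ∑ k, (q k : ℂ) * σ k (fun a => i a.1) (fun a => j a.1)
                                    * τ k (fun a => i a.1) (fun a => j a.1))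

def bipartitions (n : ℕ) : Finset (Finset (Fin n)) :=
  Finset.univ.filter (fun M : Finset (Fin n) => M.Nonempty ∧ M ≠ Finset.univ)

/-- A biseparable state. -/
def IsBiseparable {n : ℕ} (d : Fin n → ℕ) (ρ : MatD d) : Prop :=
  ∃ (p : Finset (Fin n) → ℝ) (σ : Finset (Fin n) → MatD d),
    (∀ M, 0 ≤ p M) ∧
    (∑ M ∈ bipartitions n, p M) = 1 ∧
    (∀ M ∈ bipartitions n, IsSepState d M (σ M)) ∧
    ρ = ∑ M ∈ bipartitions n, (p M : ℂ) • σ M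

section Aux

variable {n : ℕ} {d : Fin n → ℕ}

open scoped MatrixOrder Matrix.Norms.L2Operator in
lemma psd_exists_conjTranspose_mul_self {ι : Type*} [Fintype ι] [DecidableEq ι]
    {A : Matrix ι ι ℂ} (hA : A.PosSemidef) : ∃ B : Matrix ι ι ℂ, A = Bᴴ * B := by
  obtain ⟨B, rfl⟩ := CStarAlgebra.nonneg_iff_eq_star_mul_self.mp hA.nonneg
  exact ⟨B, rfl⟩

lemma ptrans_zero (M : Finset (Fin n)) : ptrans d M (0 : MatD d) = 0 := rfl

lemma feasible_zero : FeasibleW d (0 : MatD d) := by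
  refine ⟨Matrix.isHermitian_zero, fun M _ _ => ⟨0, 0, Matrix.PosSemidef.zero, ?_,
    Matrix.PosSemidef.zero, ?_, by simp [ptrans_zero]⟩⟩ <;>
  · simpa using (Matrix.PosSemidef.one (n := (a : Fin n) → Fin (d a)) (R := ℂ))

/-- trace cyclicity for the partial transpose. -/
lemma trace_mul_ptrans (M : Finset (Fin n)) (A B : MatD d) :
    (A * ptrans d M B).trace = (ptrans d M A * B).trace := by
  classical
  have key : ∀ X Y : MatD d, (X * Y).trace =
      ∑ p : ((a : Fin n) → Fin (d a)) × ((a : Fin n) → Fin (d a)), X p.1 p.2 * Y p.2 p.1 := by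
    intro X Y
    rw [Matrix.trace, Fintype.sum_prod_type]
    simp [Matrix.diag, Matrix.mul_apply]
  rw [key, key]
  have hinv : Function.Involutive
      (fun p : ((a : Fin n) → Fin (d a)) × ((a : Fin n) → Fin (d a)) =>
        ((fun a => if a ∈ M then p.2 a else p.1 a), (fun a => if a ∈ M then p.1 a else p.2 a))) := by
    intro p
    ext a <;> simp <;> split <;> rfl
  rw [← Equiv.sum_comp hinv.toPerm
    (fun p : ((a : Fin n) → Fin (d a)) × ((a : Fin n) → Fin (d a)) =>
      A p.1 p.2 * (ptrans d M B) p.2 p.1)]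
  apply Finset.sum_congr rfl
  intro p _
  have h1 : (ptrans d M B) (fun a => if a ∈ M then p.1 a else p.2 a)
      (fun a => if a ∈ M then p.2 a else p.1 a) = B p.2 p.1 := by
    unfold ptrans
    congr 1 <;> · ext a; split <;> simp [*]
  have h2 : A (fun a => if a ∈ M then p.2 a else p.1 a)
      (fun a => if a ∈ M then p.1 a else p.2 a) = (ptrans d M A) p.1 p.2 := rfl
  simp only [Function.Involutive.toPerm, Equiv.coe_fn_mk, h1, h2]

/-- A nonnegative combination of (entrywise) tensor products of PSD matrices is PSD. -/
lemma psd_sum_tensor (M : Finset (Fin n)) (m : ℕ) (q : Fin m → ℝ)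
    (σ : Fin m → Matrix ((a : {a : Fin n // a ∈ M}) → Fin (d a.1))
                        ((a : {a : Fin n // a ∈ M}) → Fin (d a.1)) ℂ)
    (τ : Fin m → Matrix ((a : {a : Fin n // a ∉ M}) → Fin (d a.1))
                        ((a : {a : Fin n // a ∉ M}) → Fin (d a.1)) ℂ)
    (hq : ∀ k, 0 ≤ q k) (hσ : ∀ k, (σ k).PosSemidef) (hτ : ∀ k, (τ k).PosSemidef) :
    Matrix.PosSemidef (Matrix.of (fun i j =>
      ∑ k, (q k : ℂ) * σ k (fun a => i a.1) (fun a => j a.1)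
                     * τ k (fun a => i a.1) (fun a => j a.1)) : MatD d) := by
  classical
  choose C hC using fun k => psd_exists_conjTranspose_mul_self (hσ k)
  choose D hD using fun k => psd_exists_conjTranspose_mul_self (hτ k)
  set E : Matrix (Fin m × ((a : {a : Fin n // a ∈ M}) → Fin (d a.1))
      × ((a : {a : Fin n // a ∉ M}) → Fin (d a.1))) ((a : Fin n) → Fin (d a)) ℂ :=
    Matrix.of (fun p i => (Real.sqrt (q p.1) : ℂ) * C p.1 p.2.1 (fun a => i a.1)
      * D p.1 p.2.2 (fun a => i a.1)) with hE
  have : (Matrix.of (fun i j =>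
      ∑ k, (q k : ℂ) * σ k (fun a => i a.1) (fun a => j a.1)
                     * τ k (fun a => i a.1) (fun a => j a.1)) : MatD d) = Eᴴ * E := by
    ext i j
    simp only [Matrix.of_apply, Matrix.mul_apply, Matrix.conjTranspose_apply,
      Fintype.sum_prod_type]
    apply Finset.sum_congr rfl
    intro k _
    rw [hC k, hD k, Matrix.mul_apply, Matrix.mul_apply]
    simp only [Matrix.conjTranspose_apply]
    rw [Finset.mul_sum, Finset.sum_comm]
    apply Finset.sum_congr rfl
    intro v _
    rw [Finset.mul_sum, Finset.sum_mul]
    apply Finset.sum_congr rfl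
    intro u _
    simp only [hE, Matrix.of_apply]
    have hstar : star ((Real.sqrt (q k) : ℝ) : ℂ) = ((Real.sqrt (q k) : ℝ) : ℂ) := by
      rw [Complex.star_def, Complex.conj_ofReal]
    have hsq : (((Real.sqrt (q k) : ℝ)) : ℂ) * (((Real.sqrt (q k) : ℝ)) : ℂ) = (q k : ℂ) := by
      rw [← Complex.ofReal_mul, Real.mul_self_sqrt (hq k)]
    rw [star_mul', star_mul', hstar, ← hsq]
    ring
  rw [this]
  exact Matrix.posSemidef_conjTranspose_mul_self E

lemma sep_psd {M : Finset (Fin n)} {σ : MatD d} (h : IsSepState d M σ) :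
    σ.PosSemidef ∧ (ptrans d M σ).PosSemidef := by
  obtain ⟨m, q, σk, τk, hq, -, hσk, hτk, hform⟩ := h
  constructor
  · have : σ = Matrix.of (fun i j =>
        ∑ k, (q k : ℂ) * σk k (fun a => i a.1) (fun a => j a.1)
                       * τk k (fun a => i a.1) (fun a => j a.1)) := by
      ext i j; exact hform i j
    rw [this]
    exact psd_sum_tensor M m q σk τk hq (fun k => (hσk k).1) (fun k => (hτk k).1)
  · have : ptrans d M σ = Matrix.of (fun i j =>
        ∑ k, (q k : ℂ) * (σk k)ᵀ (fun a => i a.1) (fun a => j a.1)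
                       * τk k (fun a => i a.1) (fun a => j a.1)) := by
      ext i j
      unfold ptrans
      rw [hform]
      apply Finset.sum_congr rfl
      intro k _
      have e1 : (fun (a : {a : Fin n // a ∈ M}) =>
          (fun b => if b ∈ M then j b else i b) a.1) = (fun (a : {a : Fin n // a ∈ M}) => j a.1) := by
        ext a; simp [a.2]
      have e2 : (fun (a : {a : Fin n // a ∈ M}) =>
          (fun b => if b ∈ M then i b else j b) a.1) = (fun (a : {a : Fin n // a ∈ M}) => i a.1) := by
        ext a; simp [a.2]
      have e3 : (fun (a : {a : Fin n // a ∉ M}) =>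
          (fun b => if b ∈ M then j b else i b) a.1) = (fun (a : {a : Fin n // a ∉ M}) => i a.1) := by
        ext a; simp [a.2]
      have e4 : (fun (a : {a : Fin n // a ∉ M}) =>
          (fun b => if b ∈ M then i b else j b) a.1) = (fun (a : {a : Fin n // a ∉ M}) => j a.1) := by
        ext a; simp [a.2]
      rw [e1, e2, e3, e4]
      rfl
    rw [this]
    exact psd_sum_tensor M m q (fun k => (σk k)ᵀ) τk hq
      (fun k => (hσk k).1.transpose) (fun k => (hτk k).1)

/-- The trace of a product of PSD matrices is nonnegative (in the complex order). -/
lemma trace_mul_psd_nonneg {ι : Type*} [Fintype ι] [DecidableEq ι]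
    {A B : Matrix ι ι ℂ} (hA : A.PosSemidef) (hB : B.PosSemidef) :
    0 ≤ (A * B).trace := by
  obtain ⟨C, hC⟩ := psd_exists_conjTranspose_mul_self hA
  obtain ⟨D, hD⟩ := psd_exists_conjTranspose_mul_self hB
  have key : (A * B).trace = ((D * Cᴴ)ᴴ * (D * Cᴴ)).trace := by
    rw [hC, hD, Matrix.conjTranspose_mul, Matrix.conjTranspose_conjTranspose,
      show Cᴴ * C * (Dᴴ * D) = Cᴴ * (C * (Dᴴ * D)) from Matrix.mul_assoc _ _ _,
      Matrix.trace_mul_comm]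
    congr 1
    simp [Matrix.mul_assoc]
  rw [key, Matrix.trace]
  apply Finset.sum_nonneg
  intro i _
  rw [Matrix.diag_apply, Matrix.mul_apply]
  apply Finset.sum_nonneg
  intro j _
  rw [Matrix.conjTranspose_apply]
  exact star_mul_self_nonneg _

end Aux

/-- `N` vanishes on biseparable states. -/
theorem Nval_eq_zero_of_biseparable {n : ℕ} (d : Fin n → ℕ) (ρ : MatD d)
    (h : IsBiseparable d ρ) : Nval d ρ = 0 := by
  classical
  obtain ⟨p, σ, hp, hsum, hsep, hρ⟩ := h
  set S : Set ℝ := {r : ℝ | ∃ W : MatD d, FeasibleW d W ∧ r = ((ρ * W).trace).re} with hS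
  have hS0 : (0 : ℝ) ∈ S := ⟨0, feasible_zero, by simp⟩
  have hlb : ∀ r ∈ S, (0 : ℝ) ≤ r := by
    rintro r ⟨W, hW, rfl⟩
    have htr : ((ρ * W).trace) = ∑ M ∈ bipartitions n, (p M : ℂ) * ((σ M * W).trace) := by
      rw [hρ, Finset.sum_mul, Matrix.trace_sum]
      apply Finset.sum_congr rfl
      intro M _
      rw [Matrix.smul_mul, Matrix.trace_smul, smul_eq_mul]
    rw [htr, Complex.re_sum]
    apply Finset.sum_nonneg
    intro M hM
    rw [Complex.re_ofReal_mul]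
    apply mul_nonneg (hp M)
    obtain ⟨hMne, hMuniv⟩ := (Finset.mem_filter.mp hM).2
    obtain ⟨P, Q, hP, -, hQ, -, hWeq⟩ := hW.2 M hMne hMuniv
    obtain ⟨hσpsd, hσpt⟩ := sep_psd (hsep M hM)
    have htr2 : (σ M * W).trace = (σ M * P).trace + (ptrans d M (σ M) * Q).trace := by
      rw [hWeq, Matrix.mul_add, Matrix.trace_add, trace_mul_ptrans]
    have hge : (0 : ℂ) ≤ (σ M * W).trace := by
      rw [htr2]
      exact add_nonneg (trace_mul_psd_nonneg hσpsd hP) (trace_mul_psd_nonneg hσpt hQ)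
    simpa using (Complex.le_def.mp hge).1
  have hInf : sInf S = 0 :=
    le_antisymm (csInf_le ⟨0, fun r hr => hlb r hr⟩ hS0) (le_csInf ⟨0, hS0⟩ hlb)
  unfold Nval
  rw [← hS, hInf, neg_zero]
end

section
/- Define N(ρ) = −min_{W ∈ 𝒲} tr(ρW). Let Λ be a trace-preserving completely positive map on matrices over ℂ^{d_1}⊗⋯⊗ℂ^{d_n} admitting a fully separable operator-sum representation, i.e., Λ(ρ) = Σ_i K_i ρ K_i† with Σ_i K_i† K_i = 𝟙 and each Kraus operator of tensor-product form K_i = A_i ⊗ B_i ⊗ ⋯ ⊗ F_i. Then N(Λ(ρ)) ≤ N(ρ) for every state ρ. -/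
open Matrix Finset ComplexOrder

def IsState {n : ℕ} {d : Fin n → ℕ} (ρ : MatD d) : Prop :=
  ρ.PosSemidef ∧ ρ.trace = 1

/-- The tensor product `A 0 ⊗ A 1 ⊗ ⋯ ⊗ A (n-1)` of local operators, as an operator on
the whole tensor product space (entrywise product formula). -/
def tensorOpD {n : ℕ} (d : Fin n → ℕ)
    (A : (a : Fin n) → Matrix (Fin (d a)) (Fin (d a)) ℂ) : MatD d :=
  fun i j => ∏ a, A a (i a) (j a)

section Aux

lemma psd_add {N : Type*} [Fintype N] [DecidableEq N] {X Y : Matrix N N ℂ}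
    (hX : X.PosSemidef) (hY : Y.PosSemidef) : (X + Y).PosSemidef := by
  refine ⟨hX.1.add hY.1, fun x => ?_⟩
  simpa [mul_add, add_mul] using add_nonneg (hX.2 x) (hY.2 x)

lemma psd_sum {N ι : Type*} [Fintype N] [DecidableEq N] (s : Finset ι) (f : ι → Matrix N N ℂ)
    (h : ∀ i ∈ s, (f i).PosSemidef) : (∑ i ∈ s, f i).PosSemidef := by
  classical
  induction s using Finset.induction_on with
  | empty => simpa using Matrix.PosSemidef.zero
  | insert _ _ hx ih =>
    rw [Finset.sum_insert hx]
    exact psd_add (h _ (by simp)) (ih fun i hi => h i (by simp [hi]))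

variable {n : ℕ} {d : Fin n → ℕ}

lemma ptrans_sum (M : Finset (Fin n)) {ι : Type*} (s : Finset ι) (f : ι → MatD d) :
    ptrans d M (∑ i ∈ s, f i) = ∑ i ∈ s, ptrans d M (f i) := by
  funext i j
  simp [ptrans, Matrix.sum_apply]

lemma ptrans_one (M : Finset (Fin n)) : ptrans d M (1 : MatD d) = 1 := by
  funext i j
  simp only [ptrans, Matrix.one_apply]
  congr 1
  simp only [eq_iff_iff]
  constructor
  · intro h
    funext a
    have := congrFun h a
    by_cases ha : a ∈ M
    · simpa [ha] using this.symm
    · simpa [ha] using this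
  · rintro rfl; rfl

lemma ptrans_ptrans (M : Finset (Fin n)) (X : MatD d) :
    ptrans d M (ptrans d M X) = X := by
  funext i j
  simp only [ptrans]
  congr 1 <;> · funext a; by_cases ha : a ∈ M <;> simp [ha]

def Lmap (d : Fin n → ℕ) (M : Finset (Fin n))
    (A : (a : Fin n) → Matrix (Fin (d a)) (Fin (d a)) ℂ) :
    (a : Fin n) → Matrix (Fin (d a)) (Fin (d a)) ℂ :=
  fun a => if a ∈ M then (A a).map (starRingEnd ℂ) else A a

noncomputable def sw (d : Fin n → ℕ) (M : Finset (Fin n)) :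
    ((a : Fin n) → Fin (d a)) → ((a : Fin n) → Fin (d a)) → ((a : Fin n) → Fin (d a)) :=
  fun p q a => if a ∈ M then q a else p a

lemma sw_invol (M : Finset (Fin n)) (p q : (a : Fin n) → Fin (d a)) :
    sw d M (sw d M p q) (sw d M q p) = p := by
  funext a; by_cases ha : a ∈ M <;> simp [sw, ha]

noncomputable def swEquiv (d : Fin n → ℕ) (M : Finset (Fin n)) :
    (((a : Fin n) → Fin (d a)) × ((a : Fin n) → Fin (d a))) ≃
      (((a : Fin n) → Fin (d a)) × ((a : Fin n) → Fin (d a))) :=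
  Function.Involutive.toPerm (fun pq => (sw d M pq.1 pq.2, sw d M pq.2 pq.1))
    (fun pq => by simp [sw_invol])

lemma key_ptrans (M : Finset (Fin n)) (A : (a : Fin n) → Matrix (Fin (d a)) (Fin (d a)) ℂ)
    (Q : MatD d) :
    (tensorOpD d A)ᴴ * ptrans d M Q * tensorOpD d A
      = ptrans d M ((tensorOpD d (Lmap d M A))ᴴ * Q * tensorOpD d (Lmap d M A)) := by
  funext i j
  have lhs : ((tensorOpD d A)ᴴ * ptrans d M Q * tensorOpD d A) i j
      = ∑ pq : (((a : Fin n) → Fin (d a)) × ((a : Fin n) → Fin (d a))),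
          star (tensorOpD d A pq.1 i) * Q (sw d M pq.1 pq.2) (sw d M pq.2 pq.1)
            * tensorOpD d A pq.2 j := by
    rw [Matrix.mul_apply]
    simp only [Matrix.mul_apply, Matrix.conjTranspose_apply, Finset.sum_mul]
    rw [← Fintype.sum_prod_type']
    exact Fintype.sum_equiv (Equiv.prodComm _ _) _ _ (fun x => by rfl)
  have rhs : (ptrans d M ((tensorOpD d (Lmap d M A))ᴴ * Q * tensorOpD d (Lmap d M A))) i j
      = ∑ pq : (((a : Fin n) → Fin (d a)) × ((a : Fin n) → Fin (d a))),
          star (tensorOpD d (Lmap d M A) pq.1 (sw d M i j)) * Q pq.1 pq.2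
            * tensorOpD d (Lmap d M A) pq.2 (sw d M j i) := by
    show ((tensorOpD d (Lmap d M A))ᴴ * Q * tensorOpD d (Lmap d M A)) (sw d M i j) (sw d M j i) = _
    rw [Matrix.mul_apply]
    simp only [Matrix.mul_apply, Matrix.conjTranspose_apply, Finset.sum_mul]
    rw [← Fintype.sum_prod_type']
    exact Fintype.sum_equiv (Equiv.prodComm _ _) _ _ (fun x => by rfl)
  rw [lhs, rhs]
  refine Fintype.sum_equiv (swEquiv d M) _ _ fun pq => ?_
  obtain ⟨p, q⟩ := pq
  show star (tensorOpD d A p i) * Q (sw d M p q) (sw d M q p) * tensorOpD d A q j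
      = star (tensorOpD d (Lmap d M A) (sw d M p q) (sw d M i j)) * Q (sw d M p q) (sw d M q p)
          * tensorOpD d (Lmap d M A) (sw d M q p) (sw d M j i)
  have h : star (tensorOpD d A p i) * tensorOpD d A q j
      = star (tensorOpD d (Lmap d M A) (sw d M p q) (sw d M i j))
          * tensorOpD d (Lmap d M A) (sw d M q p) (sw d M j i) := by
    simp only [tensorOpD, star_prod, ← Finset.prod_mul_distrib]
    refine Finset.prod_congr rfl fun a _ => ?_
    by_cases ha : a ∈ M <;> simp [Lmap, sw, ha, Matrix.map_apply] <;> ring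
  linear_combination Q (sw d M p q) (sw d M q p) * h

lemma diag_mem {N : Type*} [Fintype N] [DecidableEq N] {Q : Matrix N N ℂ}
    (hQ : Q.PosSemidef) (k : N) : 0 ≤ Q k k := by
  have := hQ.dotProduct_mulVec_nonneg (Pi.single k 1)
  simpa [dotProduct, Matrix.mulVec, Pi.single_apply, Finset.sum_ite_eq,
    apply_ite] using this

lemma entry_bound {N : Type*} [Fintype N] [DecidableEq N] {Q : Matrix N N ℂ}
    (hQ : Q.PosSemidef) (h1 : (1 - Q).PosSemidef) (i j : N) : ‖Q i j‖ ≤ 1 := by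
  have hd : ∀ k, 0 ≤ (Q k k).re ∧ (Q k k).re ≤ 1 := by
    intro k
    have h0 := diag_mem hQ k
    have h2 := diag_mem h1 k
    rw [Complex.le_def] at h0 h2
    simp only [Matrix.sub_apply, Matrix.one_apply_eq] at h2
    constructor
    · simpa using h0.1
    · have := h2.1
      simp only [Complex.sub_re, Complex.one_re, Complex.zero_re] at this
      linarith
  by_cases hij : i = j
  · subst hij
    have h0 := diag_mem hQ i
    rw [Complex.le_def] at h0
    have : ‖Q i i‖ = (Q i i).re := by
      rw [Complex.norm_def, Complex.normSq_apply]
      simp only [Complex.zero_im] at h0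
      rw [← h0.2]
      simp only [mul_zero, add_zero]
      rw [Real.sqrt_mul_self]
      simpa using h0.1
    rw [this]; exact (hd i).2
  · by_cases h0 : Q i j = 0
    · simp [h0]
    set r : ℝ := ‖Q i j‖ with hr
    have hrpos : 0 < r := by simpa [hr] using (norm_pos_iff.mpr h0)
    set c : ℂ := -(starRingEnd ℂ (Q i j)) / r with hc
    have habs_c : ‖c‖ = 1 := by
      simp [hc, map_div₀, ← hr, abs_of_pos hrpos, hrpos.ne']
    set x : N → ℂ := fun k => (if k = i then (1:ℂ) else 0) + (if k = j then c else 0) with hxdef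
    have key := hQ.dotProduct_mulVec_nonneg x
    have hx : dotProduct (star x) (Q *ᵥ x)
        = Q i i + c * Q i j + (star c) * Q j i + (star c) * c * Q j j := by
      have hsx : star x = fun k => ((if k = i then (1:ℂ) else 0) + (if k = j then star c else 0)) :=
        funext fun k => by by_cases hk : k = i <;> by_cases hk' : k = j <;> simp [hxdef, hk, hk', hij]
      rw [hsx]
      simp only [dotProduct, Matrix.mulVec, hxdef, mul_add, add_mul,
        Finset.sum_add_distrib, ite_mul, zero_mul, mul_ite, mul_zero,
        Finset.sum_ite_eq, Finset.sum_ite_eq', Finset.mem_univ, if_true]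
      ring
    have hji : Q j i = star (Q i j) := by
      have := congrFun (congrFun hQ.1 j) i
      simpa [Matrix.conjTranspose_apply] using this.symm
    have hrne : (r:ℂ) ≠ 0 := by exact_mod_cast hrpos.ne'
    have hzz : (starRingEnd ℂ) (Q i j) * Q i j = (r:ℂ)^2 := by
      rw [mul_comm, Complex.mul_conj, Complex.normSq_eq_norm_sq, ← hr]
      push_cast; ring
    have hc1 : c * Q i j = -(r:ℂ) := by
      have : c * Q i j = -((starRingEnd ℂ) (Q i j) * Q i j) / r := by rw [hc]; ring
      rw [this, hzz]; field_simp
    have hc2 : (star c) * Q j i = -(r:ℂ) := by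
      rw [hji, ← star_mul', hc1]
      simp [Complex.star_def, Complex.conj_ofReal]
    have hc3 : (star c) * c = 1 := by
      rw [mul_comm, Complex.star_def, Complex.mul_conj, Complex.normSq_eq_norm_sq, habs_c]
      norm_num
    rw [hx, hc1, hc2, hc3, one_mul] at key
    rw [Complex.le_def] at key
    have hre := key.1
    simp only [Complex.add_re, Complex.neg_re, Complex.ofReal_re, Complex.zero_re] at hre
    have h1 := (hd i).2
    have h2 := (hd j).2
    show r ≤ 1
    linarith

lemma trace_re_bound {N : Type*} [Fintype N] [DecidableEq N] (X Y : Matrix N N ℂ)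
    (hY : ∀ i j, ‖Y i j‖ ≤ 1) :
    -(∑ i, ∑ j, ‖X i j‖) ≤ ((X * Y).trace).re := by
  have h1 : ‖(X * Y).trace‖ ≤ ∑ i, ∑ j, ‖X i j‖ := by
    rw [Matrix.trace]
    refine le_trans (norm_sum_le _ _) ?_
    refine Finset.sum_le_sum fun i _ => ?_
    rw [Matrix.diag_apply, Matrix.mul_apply]
    refine le_trans (norm_sum_le _ _) ?_
    refine Finset.sum_le_sum fun j _ => ?_
    rw [norm_mul]
    calc ‖X i j‖ * ‖Y j i‖
        ≤ ‖X i j‖ * 1 := by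
          exact mul_le_mul_of_nonneg_left (hY j i) (norm_nonneg _)
      _ = ‖X i j‖ := mul_one _
  have h2 : -‖(X * Y).trace‖ ≤ ((X * Y).trace).re := by
    have h := Complex.abs_re_le_norm ((X * Y).trace)
    have := neg_abs_le ((X * Y).trace).re
    linarith [abs_le.mp h |>.1] 
  linarith

end Aux

section Dual

variable {n : ℕ} {d : Fin n → ℕ} {m : ℕ}

lemma trace_dual (ρ W : MatD d) (K : Fin m → MatD d) :
    ((∑ i, K i * ρ * (K i)ᴴ) * W).trace = (ρ * ∑ i, (K i)ᴴ * W * K i).trace := by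
  rw [Finset.sum_mul, Matrix.trace_sum, Matrix.mul_sum, Matrix.trace_sum]
  refine Finset.sum_congr rfl fun i _ => ?_
  calc (K i * ρ * (K i)ᴴ * W).trace
      = ((K i * ρ) * ((K i)ᴴ * W)).trace := by simp only [Matrix.mul_assoc]
    _ = (((K i)ᴴ * W) * (K i * ρ)).trace := Matrix.trace_mul_comm _ _
    _ = ((((K i)ᴴ * W) * K i) * ρ).trace := by simp only [Matrix.mul_assoc]
    _ = (ρ * ((K i)ᴴ * W * K i)).trace := Matrix.trace_mul_comm _ _

lemma dual_feasible (A : Fin m → (a : Fin n) → Matrix (Fin (d a)) (Fin (d a)) ℂ)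
    (hTP : ∑ i, (tensorOpD d (A i))ᴴ * tensorOpD d (A i) = 1)
    {W : MatD d} (hW : FeasibleW d W) :
    FeasibleW d (∑ i, (tensorOpD d (A i))ᴴ * W * tensorOpD d (A i)) := by
  set K := fun i => tensorOpD d (A i) with hK
  constructor
  · show _ = _
    rw [Matrix.conjTranspose_sum]
    refine Finset.sum_congr rfl fun i _ => ?_
    simp only [Matrix.conjTranspose_mul, Matrix.conjTranspose_conjTranspose, hW.1.eq]
    rw [Matrix.mul_assoc]
  · intro M hM1 hM2
    obtain ⟨P, Q, hP, hP1, hQ, hQ1, hWeq⟩ := hW.2 M hM1 hM2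
    set L := fun i => tensorOpD d (Lmap d M (A i)) with hL
    have hL1 : ∑ i, (L i)ᴴ * L i = 1 := by
      have h1 : ∀ i, (K i)ᴴ * K i = ptrans d M ((L i)ᴴ * L i) := by
        intro i
        have h := key_ptrans M (A i) 1
        rw [ptrans_one] at h
        rw [Matrix.mul_one, Matrix.mul_one] at h
        exact h
      have h2 : (1 : MatD d) = ptrans d M (∑ i, (L i)ᴴ * L i) := by
        rw [ptrans_sum, ← hTP]
        exact Finset.sum_congr rfl fun i _ => h1 i
      have := congrArg (ptrans d M) h2
      rwa [ptrans_one, ptrans_ptrans, eq_comm] at this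
    refine ⟨∑ i, (K i)ᴴ * P * K i, ∑ i, (L i)ᴴ * Q * L i,
      psd_sum _ _ (fun i _ => hP.conjTranspose_mul_mul_same _), ?_,
      psd_sum _ _ (fun i _ => hQ.conjTranspose_mul_mul_same _), ?_, ?_⟩
    · have : (1 : MatD d) - ∑ i, (K i)ᴴ * P * K i = ∑ i, (K i)ᴴ * (1 - P) * K i := by
        rw [Finset.sum_congr rfl (fun i (_ : i ∈ Finset.univ) =>
          (show (K i)ᴴ * (1 - P) * K i = (K i)ᴴ * K i - (K i)ᴴ * P * K i by noncomm_ring)),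
          Finset.sum_sub_distrib, hTP]
      rw [this]
      exact psd_sum _ _ (fun i _ => hP1.conjTranspose_mul_mul_same _)
    · have : (1 : MatD d) - ∑ i, (L i)ᴴ * Q * L i = ∑ i, (L i)ᴴ * (1 - Q) * L i := by
        rw [Finset.sum_congr rfl (fun i (_ : i ∈ Finset.univ) =>
          (show (L i)ᴴ * (1 - Q) * L i = (L i)ᴴ * L i - (L i)ᴴ * Q * L i by noncomm_ring)),
          Finset.sum_sub_distrib, hL1]
      rw [this]
      exact psd_sum _ _ (fun i _ => hQ1.conjTranspose_mul_mul_same _)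
    · rw [hWeq, ptrans_sum, ← Finset.sum_add_distrib]
      refine Finset.sum_congr rfl fun i _ => ?_
      rw [Matrix.mul_add, Matrix.add_mul]
      congr 1
      exact key_ptrans M (A i) Q

end Dual

lemma feasible_one {n : ℕ} {d : Fin n → ℕ} : FeasibleW d (1 : MatD d) := by
  refine ⟨Matrix.isHermitian_one, fun M _ _ => ⟨1, 0, Matrix.PosSemidef.one, ?_,
    Matrix.PosSemidef.zero, ?_, ?_⟩⟩
  · rw [sub_self]; exact Matrix.PosSemidef.zero
  · rw [sub_zero]; exact Matrix.PosSemidef.one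
  · rw [show ptrans d M (0 : MatD d) = 0 from rfl, add_zero]

/-- `N` does not increase under trace-preserving completely positive maps
`Λ(ρ) = Σ_i K_i ρ K_i†` whose Kraus operators `K_i` are tensor products of local
operators (fully separable operator-sum representation). -/
theorem Nval_monotone_under_separable_channels {n : ℕ} (d : Fin n → ℕ) (m : ℕ)
    (A : Fin m → (a : Fin n) → Matrix (Fin (d a)) (Fin (d a)) ℂ)
    (hTP : ∑ i, (tensorOpD d (A i))ᴴ * tensorOpD d (A i) = 1)
    (ρ : MatD d) (hρ : IsState ρ) :
    Nval d (∑ i, tensorOpD d (A i) * ρ * (tensorOpD d (A i))ᴴ) ≤ Nval d ρ := by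
  set K := fun i => tensorOpD d (A i) with hK
  set ρ' := ∑ i, K i * ρ * (K i)ᴴ with hρ'
  simp only [Nval]
  rw [neg_le_neg_iff]
  have hsub : {r : ℝ | ∃ W : MatD d, FeasibleW d W ∧ r = ((ρ' * W).trace).re}
      ⊆ {r : ℝ | ∃ W : MatD d, FeasibleW d W ∧ r = ((ρ * W).trace).re} := by
    rintro r ⟨W, hW, rfl⟩
    exact ⟨∑ i, (K i)ᴴ * W * K i, dual_feasible A hTP hW,
      congrArg Complex.re (trace_dual ρ W K)⟩
  have hne' : {r : ℝ | ∃ W : MatD d, FeasibleW d W ∧ r = ((ρ' * W).trace).re}.Nonempty :=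
    ⟨_, 1, feasible_one, rfl⟩
  by_cases hM : ∃ M : Finset (Fin n), M.Nonempty ∧ M ≠ Finset.univ
  · obtain ⟨M, hM1, hM2⟩ := hM
    have hbdd : BddBelow {r : ℝ | ∃ W : MatD d, FeasibleW d W ∧ r = ((ρ * W).trace).re} := by
      refine ⟨-(2 * ∑ i, ∑ j, ‖ρ i j‖), ?_⟩
      rintro r ⟨W, hW, rfl⟩
      obtain ⟨P, Qm, hP, hP1, hQ, hQ1, hWeq⟩ := hW.2 M hM1 hM2
      have b1 := trace_re_bound ρ P (fun i j => entry_bound hP hP1 i j)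
      have b2 := trace_re_bound ρ (ptrans d M Qm) (fun i j => entry_bound hQ hQ1 _ _)
      rw [hWeq, Matrix.mul_add, Matrix.trace_add]
      simp only [Complex.add_re]
      linarith
    exact csInf_le_csInf hbdd hne' hsub
  · push_neg at hM
    have hρ'tr : ρ'.trace = 1 := by
      calc ρ'.trace = (ρ' * 1).trace := by rw [Matrix.mul_one]
        _ = (ρ * ∑ i, (K i)ᴴ * 1 * K i).trace := trace_dual ρ 1 K
        _ = (ρ * ∑ i, (K i)ᴴ * K i).trace := by simp only [Matrix.mul_one]
        _ = 1 := by rw [hTP, Matrix.mul_one, hρ.2]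
    have hmem : ∀ (X : MatD d), X.trace = 1 → ∀ t : ℝ,
        t ∈ {r : ℝ | ∃ W : MatD d, FeasibleW d W ∧ r = ((X * W).trace).re} := by
      intro X hX t
      refine ⟨(t : ℂ) • 1, ⟨?_, fun M h1 h2 => absurd (hM M h1) h2⟩, ?_⟩
      · show ((t : ℂ) • (1 : MatD d))ᴴ = _
        rw [Matrix.conjTranspose_smul, Matrix.conjTranspose_one]
        norm_num [Complex.star_def, Complex.conj_ofReal]
      · rw [Matrix.mul_smul, Matrix.mul_one, Matrix.trace_smul, hX]
        simp
    have h1 : ¬ BddBelow {r : ℝ | ∃ W : MatD d, FeasibleW d W ∧ r = ((ρ * W).trace).re} := by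
      rintro ⟨b, hb⟩
      have := hb (hmem ρ hρ.2 (b - 1))
      linarith
    have h2 : ¬ BddBelow {r : ℝ | ∃ W : MatD d, FeasibleW d W ∧ r = ((ρ' * W).trace).re} := by
      rintro ⟨b, hb⟩
      have := hb (hmem ρ' hρ'tr (b - 1))
      linarith
    rw [Real.sInf_of_not_bddBelow h1, Real.sInf_of_not_bddBelow h2]
end
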